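/- For real symmetric positive definite n×n matrices A and B, Tr(√(√A·B·√A)) is jointly concave in (A,B) on pairs of positive definite matrices; equivalently, (A,B) ↦ ρ²(A,B) is jointly convex. -/

import Mathlib

open Matrix BigOperators

open Classical in
noncomputable def msqrt {n : ℕ} (M : Matrix (Fin n) (Fin n) ℝ) : Matrix (Fin n) (Fin n) ℝ :=
  if h : M.PosSemidef then (h.1.eigenvectorUnitary : Matrix (Fin n) (Fin n) ℝ) *
    diagonal (Real.sqrt ∘ h.1.eigenvalues) * (star h.1.eigenvectorUnitary : Matrix (Fin n) (Fin n) ℝ) else 0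


noncomputable def fnorm {n : ℕ} (A : Matrix (Fin n) (Fin n) ℝ) : ℝ :=
  Real.sqrt (∑ i, ∑ j, (A i j) ^ 2)

section Helpers
variable {n : ℕ}
local notation "Mat" => Matrix (Fin n) (Fin n) ℝ

lemma msqrt_eq {M : Mat} (h : M.PosSemidef) : msqrt M = (h.1.eigenvectorUnitary : Mat) *
    diagonal (Real.sqrt ∘ h.1.eigenvalues) * (star h.1.eigenvectorUnitary : Mat) := dif_pos h

lemma msqrt_posSemidef {M : Mat} (h : M.PosSemidef) : (msqrt M).PosSemidef := by
  rw [msqrt_eq h, star_eq_conjTranspose]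
  exact (posSemidef_diagonal_iff.2 fun i => Real.sqrt_nonneg _).mul_mul_conjTranspose_same _

lemma msqrt_mul_self {M : Mat} (h : M.PosSemidef) : msqrt M * msqrt M = M := by
  rw [msqrt_eq h]
  have hU : (star h.1.eigenvectorUnitary : Mat) * (h.1.eigenvectorUnitary : Mat) = 1 :=
    Unitary.coe_star_mul_self _
  have hspec := h.1.spectral_theorem
  rw [Unitary.conjStarAlgAut_apply] at hspec
  conv_rhs => rw [hspec]
  rw [show (h.1.eigenvectorUnitary : Mat) * diagonal (Real.sqrt ∘ h.1.eigenvalues) * (star h.1.eigenvectorUnitary : Mat) * ((h.1.eigenvectorUnitary : Mat) * diagonal (Real.sqrt ∘ h.1.eigenvalues) * (star h.1.eigenvectorUnitary : Mat)) = (h.1.eigenvectorUnitary : Mat) * diagonal (Real.sqrt ∘ h.1.eigenvalues) * ((star h.1.eigenvectorUnitary : Mat) * (h.1.eigenvectorUnitary : Mat)) * diagonal (Real.sqrt ∘ h.1.eigenvalues) * (star h.1.eigenvectorUnitary : Mat) by simp only [mul_assoc], hU, mul_one, mul_assoc (h.1.eigenvectorUnitary : Mat), diagonal_mul_diagonal]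
  congr 3
  · ext i; simp [Real.mul_self_sqrt (h.eigenvalues_nonneg i)]

lemma msqrt_herm {M : Mat} (h : M.PosSemidef) : (msqrt M)ᴴ = msqrt M :=
  (msqrt_posSemidef h).isHermitian

lemma trace_conjTranspose_mul_self_nonneg (A : Mat) : 0 ≤ (Aᴴ * A).trace := by
  rw [Matrix.trace]
  refine Finset.sum_nonneg fun i _ => ?_
  simp only [Matrix.diag_apply, Matrix.mul_apply, Matrix.conjTranspose_apply, star_trivial]
  exact Finset.sum_nonneg fun j _ => mul_self_nonneg _

lemma posDef_of_posSemidef_det_ne_zero {S : Mat} (hS : S.PosSemidef) (h : S.det ≠ 0) :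
    S.PosDef := by
  refine Matrix.PosDef.of_dotProduct_mulVec_pos hS.1 fun x hx => ?_
  set R := msqrt S with hRdef
  have hRR : R * R = S := msqrt_mul_self hS
  have hdetR : IsUnit R.det := by
    have : R.det * R.det = S.det := by rw [← Matrix.det_mul, hRR]
    refine isUnit_iff_ne_zero.2 fun h0 => h ?_
    rw [← this, h0, zero_mul]
  have hRx : R *ᵥ x ≠ 0 := by
    have := Matrix.mulVec_injective_iff_isUnit.2 ((Matrix.isUnit_iff_isUnit_det _).2 hdetR)
    intro h0
    exact hx (this (by simpa using h0))
  have key : dotProduct (star x) (S *ᵥ x) = dotProduct (star (R *ᵥ x)) (R *ᵥ x) := by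
    rw [← hRR, ← Matrix.mulVec_mulVec, dotProduct_mulVec, star_mulVec,
      (msqrt_posSemidef hS).isHermitian.eq]
  rw [key]
  rcases lt_or_eq_of_le (dotProduct_star_self_nonneg (R *ᵥ x)) with h' | h'
  · exact h'
  · exact absurd (dotProduct_star_self_eq_zero.1 h'.symm) hRx

lemma posDef_conj {B C : Mat} (hB : B.PosDef) (hC : IsUnit C.det) :
    (Cᴴ * B * C).PosDef := by
  refine Matrix.PosDef.of_dotProduct_mulVec_pos (Matrix.isHermitian_conjTranspose_mul_mul C hB.1) fun x hx => ?_
  have hCx : C *ᵥ x ≠ 0 := by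
    have := Matrix.mulVec_injective_iff_isUnit.2 ((Matrix.isUnit_iff_isUnit_det _).2 hC)
    intro h0; exact hx (this (by simpa using h0))
  simpa only [star_mulVec, dotProduct_mulVec, Matrix.vecMul_vecMul] using hB.dotProduct_mulVec_pos hCx

lemma msqrt_posDef {A : Mat} (hA : A.PosDef) : (msqrt A).PosDef := by
  refine posDef_of_posSemidef_det_ne_zero (msqrt_posSemidef hA.posSemidef) fun h0 => ?_
  have : (msqrt A).det * (msqrt A).det = A.det := by
    rw [← Matrix.det_mul, msqrt_mul_self hA.posSemidef]
  have := hA.det_pos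
  rw [← ‹(msqrt A).det * (msqrt A).det = A.det›, h0, zero_mul] at this
  exact lt_irrefl _ this

lemma posDef_smul {M : Mat} (hM : M.PosDef) {c : ℝ} (hc : 0 < c) : (c • M).PosDef := by
  refine ⟨?_, fun x hx => ?_⟩
  · unfold Matrix.IsHermitian
    rw [Matrix.conjTranspose_smul, hM.1.eq, star_trivial]
  · exact (hM.smul hc).2 hx

lemma posSemidef_smul {M : Mat} (hM : M.PosSemidef) {c : ℝ} (hc : 0 ≤ c) :
    (c • M).PosSemidef := by
  refine ⟨?_, fun x => ?_⟩
  · unfold Matrix.IsHermitian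
    rw [Matrix.conjTranspose_smul, hM.1.eq, star_trivial]
  · exact (hM.smul hc).2 x

lemma posDef_comb {A B : Mat} (hA : A.PosDef) (hB : B.PosDef) {a b : ℝ}
    (ha : 0 ≤ a) (hb : 0 ≤ b) (hab : a + b = 1) : (a • A + b • B).PosDef := by
  rcases eq_or_lt_of_le ha with h0 | h0
  · have hb1 : b = 1 := by linarith
    simpa [← h0, hb1] using hB
  · exact (posDef_smul hA h0).add_posSemidef (posSemidef_smul hB.posSemidef hb)

lemma key_le {A B T : Mat} (hA : A.PosDef) (hB : B.PosDef) (hT : T.PosDef) :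
    2 * (msqrt (msqrt A * B * msqrt A)).trace ≤ (T * A).trace + (T⁻¹ * B).trace := by
  set R := msqrt A with hRdef
  have hRpd : R.PosDef := msqrt_posDef hA
  have hRH : Rᴴ = R := hRpd.posSemidef.isHermitian
  have hRdet : IsUnit R.det := isUnit_iff_ne_zero.2 (ne_of_gt hRpd.det_pos)
  have hRRi : R * R⁻¹ = 1 := Matrix.mul_nonsing_inv R hRdet
  have hRiR : R⁻¹ * R = 1 := Matrix.nonsing_inv_mul R hRdet
  have hRR : R * R = A := msqrt_mul_self hA.posSemidef
  have hX : (R * B * R).PosDef := by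
    have := posDef_conj hB hRdet; rwa [hRH] at this
  set S := msqrt (R * B * R) with hSdef
  have hSpd : S.PosDef := msqrt_posDef hX
  have hSH : Sᴴ = S := hSpd.posSemidef.isHermitian
  have hSS : S * S = R * B * R := msqrt_mul_self hX.posSemidef
  have hW : (R * T * R).PosDef := by
    have := posDef_conj hT hRdet; rwa [hRH] at this
  set Y := msqrt (R * T * R) with hYdef
  have hYpd : Y.PosDef := msqrt_posDef hW
  have hYH : Yᴴ = Y := hYpd.posSemidef.isHermitian
  have hYdet : IsUnit Y.det := isUnit_iff_ne_zero.2 (ne_of_gt hYpd.det_pos)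
  have hYY : Y * Y = R * T * R := msqrt_mul_self hW.posSemidef
  have hYiY : Y⁻¹ * Y = 1 := Matrix.nonsing_inv_mul Y hYdet
  have hYYi : Y * Y⁻¹ = 1 := Matrix.mul_nonsing_inv Y hYdet
  have hYiH : (Y⁻¹)ᴴ = Y⁻¹ := by rw [Matrix.conjTranspose_nonsing_inv, hYH]
  set M := Y⁻¹ * S - Y with hMdef
  have hMH : Mᴴ = S * Y⁻¹ - Y := by
    rw [hMdef, Matrix.conjTranspose_sub, Matrix.conjTranspose_mul, hSH, hYiH, hYH]
  have expand : Mᴴ * M = S * ((Y * Y)⁻¹ * S) - S - S + Y * Y := by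
    rw [hMH, hMdef, Matrix.mul_inv_rev]
    rw [Matrix.sub_mul, Matrix.mul_sub, Matrix.mul_sub]
    rw [show S * Y⁻¹ * (Y⁻¹ * S) = S * (Y⁻¹ * Y⁻¹ * S) by noncomm_ring,
        show S * Y⁻¹ * Y = S * (Y⁻¹ * Y) by noncomm_ring,
        show Y * (Y⁻¹ * S) = Y * Y⁻¹ * S by noncomm_ring,
        hYiY, hYYi, Matrix.mul_one, Matrix.one_mul]
    abel
  have htr0 : 0 ≤ (Mᴴ * M).trace := trace_conjTranspose_mul_self_nonneg M
  rw [expand, Matrix.trace_add, Matrix.trace_sub, Matrix.trace_sub] at htr0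
  have tr1 : (S * ((Y * Y)⁻¹ * S)).trace = (T⁻¹ * B).trace := by
    rw [Matrix.trace_mul_comm, show (Y * Y)⁻¹ * S * S = (Y * Y)⁻¹ * (S * S) by noncomm_ring,
      hSS, hYY, Matrix.mul_inv_rev, Matrix.mul_inv_rev]
    have e2 : R⁻¹ * (T⁻¹ * R⁻¹) * (R * B * R) = R⁻¹ * (T⁻¹ * B * R) := by
      rw [show R⁻¹ * (T⁻¹ * R⁻¹) * (R * B * R) = R⁻¹ * (T⁻¹ * ((R⁻¹ * R) * (B * R)))
          by noncomm_ring, hRiR, Matrix.one_mul]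
      noncomm_ring
    rw [e2, Matrix.trace_mul_comm, show T⁻¹ * B * R * R⁻¹ = T⁻¹ * B * (R * R⁻¹)
        by noncomm_ring, hRRi, Matrix.mul_one]
  have tr2 : (Y * Y).trace = (T * A).trace := by
    rw [hYY, Matrix.trace_mul_cycle, hRR, Matrix.trace_mul_comm]
  rw [tr1, tr2] at htr0
  linarith

lemma key_eq {A B : Mat} (hA : A.PosDef) (hB : B.PosDef) :
    ∃ T : Mat, T.PosDef ∧
      (T * A).trace + (T⁻¹ * B).trace = 2 * (msqrt (msqrt A * B * msqrt A)).trace := by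
  set R := msqrt A with hRdef
  have hRpd : R.PosDef := msqrt_posDef hA
  have hRH : Rᴴ = R := hRpd.posSemidef.isHermitian
  have hRdet : IsUnit R.det := isUnit_iff_ne_zero.2 (ne_of_gt hRpd.det_pos)
  have hRRi : R * R⁻¹ = 1 := Matrix.mul_nonsing_inv R hRdet
  have hRiR : R⁻¹ * R = 1 := Matrix.nonsing_inv_mul R hRdet
  have hRR : R * R = A := msqrt_mul_self hA.posSemidef
  have hRiH : (R⁻¹)ᴴ = R⁻¹ := by rw [Matrix.conjTranspose_nonsing_inv, hRH]
  have hRidet : IsUnit (R⁻¹).det := Matrix.isUnit_nonsing_inv_det R hRdet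
  have hX : (R * B * R).PosDef := by
    have := posDef_conj hB hRdet; rwa [hRH] at this
  set S := msqrt (R * B * R) with hSdef
  have hSpd : S.PosDef := msqrt_posDef hX
  have hSdet : IsUnit S.det := isUnit_iff_ne_zero.2 (ne_of_gt hSpd.det_pos)
  have hSiS : S⁻¹ * S = 1 := Matrix.nonsing_inv_mul S hSdet
  have hSS : S * S = R * B * R := msqrt_mul_self hX.posSemidef
  refine ⟨R⁻¹ * S * R⁻¹, ?_, ?_⟩
  · have := posDef_conj hSpd hRidet; rwa [hRiH] at this
  · have hTinv : (R⁻¹ * S * R⁻¹)⁻¹ = R * S⁻¹ * R := by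
      rw [Matrix.mul_inv_rev, Matrix.mul_inv_rev, Matrix.nonsing_inv_nonsing_inv R hRdet]
      noncomm_ring
    have t1 : (R⁻¹ * S * R⁻¹ * A).trace = S.trace := by
      rw [← hRR, show R⁻¹ * S * R⁻¹ * (R * R) = R⁻¹ * S * ((R⁻¹ * R) * R) by noncomm_ring,
        hRiR, Matrix.one_mul, Matrix.trace_mul_cycle, hRRi, Matrix.one_mul]
    have t2 : (R * S⁻¹ * R * B).trace = S.trace := by
      rw [show R * S⁻¹ * R * B = R * (S⁻¹ * (R * B)) by noncomm_ring,
        Matrix.trace_mul_comm,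
        show S⁻¹ * (R * B) * R = S⁻¹ * (R * B * R) by noncomm_ring, ← hSS,
        show S⁻¹ * (S * S) = (S⁻¹ * S) * S by noncomm_ring, hSiS, Matrix.one_mul]
    rw [hTinv, t1, t2]
    ring

end Helpers

theorem stmt_17 {n : ℕ} :
    ConcaveOn ℝ {p : Matrix (Fin n) (Fin n) ℝ × Matrix (Fin n) (Fin n) ℝ |
        p.1.PosDef ∧ p.2.PosDef}
      (fun p => (msqrt (msqrt p.1 * p.2 * msqrt p.1)).trace) ∧
    ConvexOn ℝ {p : Matrix (Fin n) (Fin n) ℝ × Matrix (Fin n) (Fin n) ℝ |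
        p.1.PosDef ∧ p.2.PosDef}
      (fun p => p.1.trace + p.2.trace -
        2 * (msqrt (msqrt p.1 * p.2 * msqrt p.1)).trace) := by
  have hset : Convex ℝ {p : Matrix (Fin n) (Fin n) ℝ × Matrix (Fin n) (Fin n) ℝ | p.1.PosDef ∧ p.2.PosDef} := by
    intro p hp q hq a b ha hb hab
    exact ⟨posDef_comb hp.1 hq.1 ha hb hab, posDef_comb hp.2 hq.2 ha hb hab⟩
  have hconc : ConcaveOn ℝ {p : Matrix (Fin n) (Fin n) ℝ × Matrix (Fin n) (Fin n) ℝ | p.1.PosDef ∧ p.2.PosDef}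
      (fun p => (msqrt (msqrt p.1 * p.2 * msqrt p.1)).trace) := by
    refine ⟨hset, ?_⟩
    rintro p ⟨hp1, hp2⟩ q ⟨hq1, hq2⟩ a b ha hb hab
    have hA : (a • p.1 + b • q.1).PosDef := posDef_comb hp1 hq1 ha hb hab
    have hB : (a • p.2 + b • q.2).PosDef := posDef_comb hp2 hq2 ha hb hab
    obtain ⟨T, hT, hTeq⟩ := key_eq hA hB
    have h1 := key_le hp1 hp2 hT
    have h2 := key_le hq1 hq2 hT
    have expand : (T * (a • p.1 + b • q.1)).trace + (T⁻¹ * (a • p.2 + b • q.2)).trace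
        = a * ((T * p.1).trace + (T⁻¹ * p.2).trace)
          + b * ((T * q.1).trace + (T⁻¹ * q.2).trace) := by
      simp only [Matrix.mul_add, Matrix.mul_smul, Matrix.trace_add, Matrix.trace_smul,
        smul_eq_mul]
      ring
    have hfst : (a • p + b • q).1 = a • p.1 + b • q.1 := rfl
    have hsnd : (a • p + b • q).2 = a • p.2 + b • q.2 := rfl
    simp only [smul_eq_mul, hfst, hsnd]
    nlinarith [mul_le_mul_of_nonneg_left h1 ha, mul_le_mul_of_nonneg_left h2 hb]
  refine ⟨hconc, ⟨hset, ?_⟩⟩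
  intro p hp q hq a b ha hb hab
  have hc := hconc.2 hp hq ha hb hab
  have hfst : (a • p + b • q).1 = a • p.1 + b • q.1 := rfl
  have hsnd : (a • p + b • q).2 = a • p.2 + b • q.2 := rfl
  simp only [smul_eq_mul, hfst, hsnd] at hc ⊢
  simp only [Matrix.trace_add, Matrix.trace_smul, smul_eq_mul]
  linarith
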